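/- For any commutative ring R and any compact topological space Y, the R-module F(Y;R) of cut-and-paste continuous functions Y → R is a flat R-module. -/

import Mathlib

open Set

/-- A function `f : Y → R` is *cut-and-paste continuous* if the preimage of every
point is clopen. -/
def IsCutPaste (Y R : Type) [TopologicalSpace Y] (f : Y → R) : Prop :=
  ∀ r : R, IsClopen (f ⁻¹' {r})

lemma isCutPaste_comb {Y R : Type} [TopologicalSpace Y] {f g : Y → R}
    (hf : IsCutPaste Y R f) (hg : IsCutPaste Y R g) (h : R → R → R) :
    IsCutPaste Y R (fun y => h (f y) (g y)) := by
  have key : ∀ s : Set R, IsOpen ((fun y => h (f y) (g y)) ⁻¹' s) := by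
    intro s
    have e : (fun y => h (f y) (g y)) ⁻¹' s
        = ⋃ (p : R × R) (_ : h p.1 p.2 ∈ s), f ⁻¹' {p.1} ∩ g ⁻¹' {p.2} := by
      ext y
      simp only [Set.mem_preimage, Set.mem_iUnion, Set.mem_inter_iff, Set.mem_singleton_iff]
      constructor
      · intro hy; exact ⟨(f y, g y), hy, rfl, rfl⟩
      · rintro ⟨⟨a, b⟩, hs, ha, hb⟩; rw [ha, hb]; exact hs
    rw [e]
    exact isOpen_iUnion fun p => isOpen_iUnion fun _ => ((hf p.1).2.inter (hg p.2).2)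
  intro r
  refine ⟨?_, key {r}⟩
  rw [← isOpen_compl_iff, ← Set.preimage_compl]
  exact key {r}ᶜ

lemma isCutPaste_const {Y R : Type} [TopologicalSpace Y] (r : R) :
    IsCutPaste Y R (fun _ => r) := by
  intro s
  classical
  rw [Set.preimage_const]
  split_ifs
  exacts [isClopen_univ, isClopen_empty]

/-- The `R`-algebra of cut-and-paste continuous functions `Y → R`. -/
def cutPasteAlgebra (Y R : Type) [TopologicalSpace Y] [CommRing R] :
    Subalgebra R (Y → R) where
  carrier := {f | IsCutPaste Y R f}
  mul_mem' := fun hf hg => isCutPaste_comb hf hg (· * ·)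
  add_mem' := fun hf hg => isCutPaste_comb hf hg (· + ·)
  algebraMap_mem' := fun r => isCutPaste_const r



section AuxFlat

open TensorProduct LinearMap

/-- A module in which every finite subset is contained in a flat submodule is flat. -/
lemma flat_of_forall_finset {R M : Type} [CommRing R] [AddCommGroup M] [Module R M]
    (h : ∀ s : Finset M, ∃ N : Submodule R M, (↑s : Set M) ⊆ N ∧ Module.Flat R N) :
    Module.Flat R M := by
  classical
  rw [Module.Flat.iff_rTensor_injective']
  intro I
  rw [injective_iff_map_eq_zero]
  intro x hx
  obtain ⟨S, rfl⟩ := TensorProduct.exists_finset x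
  obtain ⟨N, hS, hN⟩ := h (S.image Prod.snd)
  have hmem : ∀ p ∈ S, p.2 ∈ N := fun p hp =>
    hS (Finset.mem_coe.mpr (Finset.mem_image_of_mem Prod.snd hp))
  set z : ↥I ⊗[R] ↥N := ∑ p ∈ S.attach, p.1.1 ⊗ₜ (⟨p.1.2, hmem p.1 p.2⟩ : ↥N) with hz
  have hzx : lTensor ↥I N.subtype z = ∑ p ∈ S, p.1 ⊗ₜ p.2 := by
    rw [hz, map_sum, ← Finset.sum_attach S fun p => p.1 ⊗ₜ[R] p.2]
    exact Finset.sum_congr rfl fun p _ => by simp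
  have h1 : lTensor R N.subtype (rTensor ↥N I.subtype z) = 0 := by
    have := congrArg (fun w => w z) (lTensor_comp_rTensor (M := ↥I) I.subtype N.subtype)
    have := congrArg (fun w => w z) (rTensor_comp_lTensor (M := ↥I) I.subtype N.subtype)
    simp only [coe_comp, Function.comp_apply] at *
    rw [‹lTensor R N.subtype (rTensor ↥N I.subtype z) = _›, ← this, hzx, hx]
  have hinj1 : Function.Injective (lTensor R N.subtype) :=
    Module.Flat.lTensor_preserves_injective_linearMap N.subtype N.injective_subtype
  have hz0 : z = 0 := by
    have h2 := Module.Flat.iff_rTensor_injective'.mp hN I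
    have h3 : rTensor ↥N I.subtype z = 0 := hinj1 (by rw [h1]; simp)
    exact h2 (by rw [h3]; simp)
  rw [← hzx, hz0, map_zero]

end AuxFlat

/-- A cut-and-paste function on a compact space has finite range. -/
lemma cutPaste_range_finite {Y R : Type} [TopologicalSpace Y] [CompactSpace Y]
    {f : Y → R} (hf : IsCutPaste Y R f) : (Set.range f).Finite := by
  obtain ⟨t, ht⟩ := IsCompact.elim_finite_subcover (isCompact_univ (X := Y))
    (fun r : R => f ⁻¹' {r}) (fun r => (hf r).2) (fun y _ => Set.mem_iUnion.mpr ⟨f y, rfl⟩)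
  refine Set.Finite.subset t.finite_toSet ?_
  rintro r ⟨y, rfl⟩
  obtain ⟨r', hr', hy⟩ := Set.mem_iUnion₂.mp (ht (Set.mem_univ y))
  exact hy ▸ hr'

/-- A two-valued function cut by a clopen set is cut-and-paste. -/
lemma isCutPaste_ite {Y R : Type} [TopologicalSpace Y] {U : Set Y} (hU : IsClopen U)
    (a b : R) [DecidablePred (· ∈ U)] :
    IsCutPaste Y R (fun y => if y ∈ U then a else b) := by
  classical
  intro r
  have : (fun y => if y ∈ U then a else b) ⁻¹' {r}
      = (if a = r then U else ∅) ∪ (if b = r then Uᶜ else ∅) := by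
    ext y
    by_cases ha : a = r <;> by_cases hb : b = r <;> by_cases hy : y ∈ U <;>
      simp [ha, hb, hy]
  rw [this]
  refine IsClopen.union ?_ ?_ <;> split_ifs <;>
    first | exact hU | exact hU.compl | exact isClopen_empty


set_option maxHeartbeats 1000000 in
set_option synthInstance.maxHeartbeats 1000000 in
/-- For any commutative ring `R` and any compact topological space `Y`,
the `R`-module `F(Y;R)` of cut-and-paste continuous functions `Y → R` is flat. -/
theorem cutPasteAlgebra_flat (Y R : Type) [TopologicalSpace Y] [CompactSpace Y]
    [CommRing R] : Module.Flat R (cutPasteAlgebra Y R) := by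
  classical
  apply flat_of_forall_finset
  intro s
  -- the joint evaluation map
  set Φ : Y → (↥s → R) := fun y f => f.1.1 y with hΦ
  have hcp : ∀ f : ↥s, IsCutPaste Y R f.1.1 := fun f => f.1.2
  have hfib : ∀ v : ↥s → R, IsClopen (Φ ⁻¹' {v}) := by
    intro v
    have he : Φ ⁻¹' {v} = ⋂ f : ↥s, (f.1.1 ⁻¹' {v f}) := by
      ext y
      simp only [Set.mem_preimage, Set.mem_singleton_iff, Set.mem_iInter, funext_iff, hΦ]
    rw [he]
    exact isClopen_iInter_of_finite fun f => hcp f (v f)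
  have hran : (Set.range Φ).Finite := by
    have hsub : Set.range Φ ⊆ {g : ↥s → R | ∀ f, g f ∈ Set.range f.1.1} := by
      rintro g ⟨y, rfl⟩ f
      exact ⟨y, rfl⟩
    exact (Set.Finite.pi' (fun f => cutPaste_range_finite (hcp f))).subset hsub
  -- indicator functions of the fibers
  set e : (↥s → R) → ↥(cutPasteAlgebra Y R) := fun v =>
    ⟨fun y => if y ∈ Φ ⁻¹' {v} then (1 : R) else 0, isCutPaste_ite (hfib v) 1 0⟩ with he
  -- evaluation linear maps
  set ev : Y → (↥(cutPasteAlgebra Y R) →ₗ[R] R) := fun y =>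
    (LinearMap.proj y).comp (Subalgebra.toSubmodule (cutPasteAlgebra Y R)).subtype with hev
  have hev_apply : ∀ (y : Y) (g : ↥(cutPasteAlgebra Y R)), ev y g = g.1 y := fun _ _ => rfl
  haveI : Fintype ↥(Set.range Φ) := hran.fintype
  set e' : ↥(Set.range Φ) → ↥(cutPasteAlgebra Y R) := fun v => e v.1 with he'
  have hval : ∀ (y : Y) (v : ↥(Set.range Φ)), ev y (e' v) = if Φ y = v.1 then (1 : R) else 0 := by
    intro y v
    by_cases h : Φ y = v.1
    · rw [if_pos h]
      show (if y ∈ Φ ⁻¹' {v.1} then (1 : R) else 0) = 1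
      exact if_pos h
    · rw [if_neg h]
      show (if y ∈ Φ ⁻¹' {v.1} then (1 : R) else 0) = 0
      exact if_neg h
  have hli : LinearIndependent R e' := by
    rw [Fintype.linearIndependent_iff]
    intro g hg w
    obtain ⟨y, hy⟩ := w.2
    have hsum := congrArg (ev y) hg
    rw [map_sum, map_zero] at hsum
    have hterm : ∀ v : ↥(Set.range Φ), ev y (g v • e' v) = if v = w then g v else 0 := by
      intro v
      rw [map_smul, hval, smul_eq_mul]
      by_cases h : v = w
      · subst h
        rw [if_pos hy, if_pos rfl, mul_one]
      · rw [if_neg, if_neg h, mul_zero]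
        intro hcon
        exact h (Subtype.ext (hcon ▸ hy))
    rw [Finset.sum_congr rfl (fun v _ => hterm v), Finset.sum_ite_eq' Finset.univ w g,
      if_pos (Finset.mem_univ w)] at hsum
    exact hsum
  have hdecomp : ∀ (f) (hf : f ∈ s), f = ∑ v : ↥(Set.range Φ), (v.1 ⟨f, hf⟩) • e' v := by
    intro f hf
    apply Subtype.ext
    funext y
    have hL : f.1 y = ev y f := rfl
    have hR : (∑ v : ↥(Set.range Φ), (v.1 ⟨f, hf⟩) • e' v).1 y
        = ev y (∑ v : ↥(Set.range Φ), (v.1 ⟨f, hf⟩) • e' v) := rfl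
    rw [hL]
    show ev y f = _
    rw [show ((∑ v : ↥(Set.range Φ), (v.1 ⟨f, hf⟩) • e' v : ↥(cutPasteAlgebra Y R)) : Y → R) y
        = ev y (∑ v : ↥(Set.range Φ), (v.1 ⟨f, hf⟩) • e' v) from rfl, map_sum]
    have hterm : ∀ v : ↥(Set.range Φ),
        ev y ((v.1 ⟨f, hf⟩) • e' v) = if v = (⟨Φ y, Set.mem_range_self y⟩ : ↥(Set.range Φ))
          then v.1 ⟨f, hf⟩ else 0 := by
      intro v
      rw [map_smul, hval, smul_eq_mul]
      by_cases h : v = (⟨Φ y, Set.mem_range_self y⟩ : ↥(Set.range Φ))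
      · subst h
        rw [if_pos rfl, if_pos rfl, mul_one]
      · rw [if_neg, if_neg h, mul_zero]
        intro hcon
        exact h (Subtype.ext hcon.symm)
    rw [Finset.sum_congr rfl (fun v _ => hterm v),
      Finset.sum_ite_eq' Finset.univ (⟨Φ y, Set.mem_range_self y⟩ : ↥(Set.range Φ))
        (fun v => v.1 ⟨f, hf⟩), if_pos (Finset.mem_univ _)]
    rfl
  refine ⟨Submodule.span R (Set.range e'), ?_, ?_⟩
  · intro f hf
    rw [SetLike.mem_coe, hdecomp f hf]
    exact Submodule.sum_mem _ fun v _ =>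
      Submodule.smul_mem _ _ (Submodule.subset_span (Set.mem_range_self v))
  · haveI : Module.Free R ↥(Submodule.span R (Set.range e')) :=
      Module.Free.of_basis (Module.Basis.span hli)
    infer_instance
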